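/- Let T be a rooted binary tree whose leaves carry Boolean labels. Define the Fitch set B(v) ⊆ {0,1} at each node by: B(leaf) = {its label}, and B(u) = B(v1) ∩ B(v2) if this intersection is nonempty, otherwise B(u) = B(v1) ∪ B(v2), where v1, v2 are the children of u. Define the Sankoff costs s0(v), s1(v) ∈ ℕ ∪ {∞} by: at a leaf with label b, sb = 0 and s(1−b) = ∞; at an internal node u with children v1, v2, s1(u) = min(s1(v1), s0(v1)+1) + min(s1(v2), s0(v2)+1) and s0(u) = min(s0(v1), s1(v1)+1) + min(s0(v2), s1(v2)+1). Then for every node v of T, B(v) = { b ∈ {0,1} : sb(v) = min(s0(v), s1(v)) }; in particular B(v) = {0,1} if and only if s0(v) = s1(v). -/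

import Mathlib

/-- A rooted binary tree with Boolean leaf labels: either a leaf carrying a label in
`{0, 1}` (modelled by `Bool`), or an internal node with exactly two children. -/
inductive BTree : Type
  | leaf : Bool → BTree
  | node : BTree → BTree → BTree

/-- The Fitch set `B(v) ⊆ {0,1}`: at a leaf it is the singleton of the label; at an
internal node it is the intersection of the children's sets if nonempty, and their union
otherwise. -/
def fitchSet : BTree → Finset Bool
  | .leaf b => {b}
  | .node l r =>
      if (fitchSet l ∩ fitchSet r).Nonempty then fitchSet l ∩ fitchSet r
      else fitchSet l ∪ fitchSet r

/-- The Sankoff cost `s_b(v) ∈ ℕ ∪ {∞}`: at a leaf with label `b'`, it is `0` if `b = b'`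
and `∞` otherwise; at an internal node with children `v₁, v₂`,
`s_b(u) = min(s_b(v₁), s_{¬b}(v₁) + 1) + min(s_b(v₂), s_{¬b}(v₂) + 1)`. -/
noncomputable def sankoff (b : Bool) : BTree → ℕ∞
  | .leaf b' => if b = b' then 0 else ⊤
  | .node l r =>
      min (sankoff b l) (sankoff (!b) l + 1) + min (sankoff b r) (sankoff (!b) r + 1)

/-- For every node `v` of a rooted binary tree with Boolean leaf labels
(equivalently, for every such tree, since every node is the root of a subtree), the Fitch
set equals the set of values achieving the minimum Sankoff cost:
`B(v) = {b : s_b(v) = min(s₀(v), s₁(v))}`; in particular `B(v) = {0,1}` iff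
`s₀(v) = s₁(v)`. -/
lemma fitch_key (T : BTree) : ∃ m : ℕ∞, m ≠ ⊤ ∧ (∃ c, c ∈ fitchSet T) ∧
    ∀ b, (b ∈ fitchSet T → sankoff b T = m) ∧ (b ∉ fitchSet T → m < sankoff b T) := by
  induction T with
  | leaf b' =>
      refine ⟨0, by simp, ⟨b', by simp [fitchSet]⟩, fun b => ⟨?_, ?_⟩⟩
      · intro hb
        simp only [fitchSet, Finset.mem_singleton] at hb
        simp [sankoff, hb]
      · intro hb
        simp only [fitchSet, Finset.mem_singleton] at hb
        simp [sankoff, hb]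
  | node l r ihl ihr =>
      obtain ⟨ml, hml, ⟨cl, hcl⟩, hl⟩ := ihl
      obtain ⟨mr, hmr, ⟨cr, hcr⟩, hr⟩ := ihr
      -- the "mixed min" at each child equals m or m+1 depending on membership
      have H : ∀ (t : BTree) (mt : ℕ∞), mt ≠ ⊤ → (∃ c, c ∈ fitchSet t) →
          (∀ b, (b ∈ fitchSet t → sankoff b t = mt) ∧ (b ∉ fitchSet t → mt < sankoff b t)) →
          ∀ b, min (sankoff b t) (sankoff (!b) t + 1) =
            if b ∈ fitchSet t then mt else mt + 1 := by
        intro t mt hmt ⟨c, hc⟩ ht b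
        by_cases hb : b ∈ fitchSet t
        · simp only [hb, if_pos]
          rw [(ht b).1 hb]
          refine min_eq_left ?_
          have h1 : mt ≤ sankoff (!b) t := by
            by_cases hnb : (!b) ∈ fitchSet t
            · exact ((ht (!b)).1 hnb).ge
            · exact ((ht (!b)).2 hnb).le
          exact le_trans h1 le_self_add
        · have hcb : c = !b := by cases b <;> cases c <;> simp_all
          rw [hcb] at hc
          simp only [hb, if_neg, not_false_iff]
          rw [(ht (!b)).1 hc]
          refine min_eq_right ?_
          exact (ENat.add_one_le_iff hmt).2 ((ht b).2 hb)
      have Hl := H l ml hml ⟨cl, hcl⟩ hl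
      have Hr := H r mr hmr ⟨cr, hcr⟩ hr
      have hs : ∀ b, sankoff b (BTree.node l r) =
          (if b ∈ fitchSet l then ml else ml + 1) +
          (if b ∈ fitchSet r then mr else mr + 1) := by
        intro b
        simp only [sankoff, Hl b, Hr b]
      have hmm : ml + mr ≠ ⊤ := by
        exact WithTop.add_ne_top.2 ⟨hml, hmr⟩
      by_cases h : (fitchSet l ∩ fitchSet r).Nonempty
      · -- intersection case
        have hfs : fitchSet (BTree.node l r) = fitchSet l ∩ fitchSet r := by
          simp [fitchSet, h]
        obtain ⟨c, hc⟩ := h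
        refine ⟨ml + mr, hmm, ⟨c, by rw [hfs]; exact hc⟩, fun b => ⟨?_, ?_⟩⟩
        · intro hb
          rw [hfs, Finset.mem_inter] at hb
          rw [hs b, if_pos hb.1, if_pos hb.2]
        · intro hb
          rw [hfs, Finset.mem_inter] at hb
          rw [hs b]
          by_cases h1 : b ∈ fitchSet l <;> by_cases h2 : b ∈ fitchSet r
          · exact absurd ⟨h1, h2⟩ hb
          · rw [if_pos h1, if_neg h2, ← add_assoc]
            exact (ENat.lt_add_one_iff hmm).2 le_rfl
          · rw [if_neg h1, if_pos h2, add_right_comm]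
            exact (ENat.lt_add_one_iff hmm).2 le_rfl
          · rw [if_neg h1, if_neg h2]
            have : ml + mr < ml + mr + 1 := (ENat.lt_add_one_iff hmm).2 le_rfl
            refine lt_of_lt_of_le this ?_
            rw [show ml + 1 + (mr + 1) = ml + mr + 1 + 1 by ring]
            exact le_self_add
      · -- union case: the two Fitch sets are disjoint singletons covering everything
        have hfs : fitchSet (BTree.node l r) = fitchSet l ∪ fitchSet r := by
          simp [fitchSet, h]
        have hdisj : ∀ b : Bool, ¬ (b ∈ fitchSet l ∧ b ∈ fitchSet r) := by
          intro b hb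
          exact h ⟨b, Finset.mem_inter.2 hb⟩
        have hall : ∀ b : Bool, b ∈ fitchSet l ∪ fitchSet r := by
          intro b
          rw [Finset.mem_union]
          by_cases h1 : b ∈ fitchSet l
          · exact Or.inl h1
          · right
            have hclb : cl = !b := by cases b <;> cases cl <;> simp_all
            have hcrb : cr = b := by
              by_contra hne
              have : cr = !b := by cases b <;> cases cr <;> simp_all
              rw [this] at hcr
              rw [hclb] at hcl
              exact hdisj (!b) ⟨hcl, hcr⟩
            rwa [hcrb] at hcr
        refine ⟨ml + mr + 1, WithTop.add_ne_top.2 ⟨hmm, ENat.one_ne_top⟩, ⟨cl, by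
          rw [hfs]; exact Finset.mem_union.2 (Or.inl hcl)⟩, fun b => ⟨?_, ?_⟩⟩
        · intro _
          rw [hs b]
          rcases Finset.mem_union.1 (hall b) with h1 | h2
          · rw [if_pos h1, if_neg (fun h2 => hdisj b ⟨h1, h2⟩), ← add_assoc]
          · rw [if_pos h2, if_neg (fun h1 => hdisj b ⟨h1, h2⟩), add_right_comm]
        · intro hb
          exact absurd (by rw [hfs]; exact hall b) hb

theorem fitchSet_eq_sankoff_argmin (T : BTree) :
    (∀ b : Bool, b ∈ fitchSet T ↔
      sankoff b T = min (sankoff false T) (sankoff true T)) ∧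
    (fitchSet T = {false, true} ↔ sankoff false T = sankoff true T) := by
  obtain ⟨m, hm, ⟨c, hc⟩, h⟩ := fitch_key T
  have hge : ∀ b, m ≤ sankoff b T := by
    intro b
    by_cases hb : b ∈ fitchSet T
    · exact ((h b).1 hb).ge
    · exact ((h b).2 hb).le
  have hmin : min (sankoff false T) (sankoff true T) = m := by
    refine le_antisymm ?_ (le_min (hge false) (hge true))
    have := (h c).1 hc
    cases c
    · exact le_trans (min_le_left _ _) this.le
    · exact le_trans (min_le_right _ _) this.le
  have main : ∀ b : Bool, b ∈ fitchSet T ↔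
      sankoff b T = min (sankoff false T) (sankoff true T) := by
    intro b
    rw [hmin]
    constructor
    · exact (h b).1
    · intro hb
      by_contra hnb
      exact absurd hb (ne_of_gt ((h b).2 hnb))
  refine ⟨main, ?_, ?_⟩
  · intro hfs
    have h0 : sankoff false T = m := (main false).1 (by rw [hfs]; simp) |>.trans hmin
    have h1 : sankoff true T = m := (main true).1 (by rw [hfs]; simp) |>.trans hmin
    rw [h0, h1]
  · intro heq
    have h0 : sankoff false T = min (sankoff false T) (sankoff true T) := by
      rw [heq, min_self]
    have h1 : sankoff true T = min (sankoff false T) (sankoff true T) := by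
      rw [← heq] at h0 ⊢; exact h0
    ext b
    cases b <;> simp [(main false).2 h0, (main true).2 h1]
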